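/- Let H be a complex Hilbert space, let C be a bounded linear operator on H with bounded inverse, and let (f_i)_{i∈ℕ} be a C-controlled frame for H with bounds A, B whose C-controlled frame operator S_C f = ∑_i ⟪f, f_i⟫ C f_i defines a bounded operator on H. Then S_C is self-adjoint, satisfies A‖f‖² ≤ ⟪S_C f, f⟫ ≤ B‖f‖² for all f ∈ H, and S_C is invertible with ‖S_C^{-1}‖ ≤ A^{-1}. -/

import Mathlib

open scoped InnerProductSpace

/-- The frame operator `S` of a `C`-controlled frame with bounds `A, B` is
self-adjoint, satisfies `A‖f‖² ≤ ⟪S f, f⟫ ≤ B‖f‖²`, and is invertible with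
`‖S⁻¹‖ ≤ A⁻¹`.  The paper's inner product `⟪S f, f⟫` (linear in the first argument)
is Mathlib's `⟪f, S f⟫_ℂ`. -/
theorem controlled_frame_operator_properties
    {H : Type*} [NormedAddCommGroup H] [InnerProductSpace ℂ H] [CompleteSpace H]
    (C : H →L[ℂ] H)
    (Cinv : H →L[ℂ] H) (hCr : C ∘L Cinv = 1) (hCl : Cinv ∘L C = 1)
    (f : ℕ → H) (A B : ℝ) (hA : 0 < A) (hAB : A ≤ B)
    (s : H → ℝ)
    (hFrame : ∀ x : H, HasSum (fun i => ⟪f i, x⟫_ℂ * ⟪x, C (f i)⟫_ℂ) ((s x : ℝ) : ℂ) ∧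
      A * ‖x‖ ^ 2 ≤ s x ∧ s x ≤ B * ‖x‖ ^ 2)
    (S : H →L[ℂ] H) (hS : ∀ x : H, HasSum (fun i => ⟪f i, x⟫_ℂ • C (f i)) (S x)) :
    IsSelfAdjoint S ∧
    (∀ x : H, A * ‖x‖ ^ 2 ≤ (⟪x, S x⟫_ℂ).re ∧ (⟪x, S x⟫_ℂ).re ≤ B * ‖x‖ ^ 2) ∧
    ∃ Sinv : H →L[ℂ] H, S ∘L Sinv = 1 ∧ Sinv ∘L S = 1 ∧ ‖Sinv‖ ≤ A⁻¹ := by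
  -- key: ⟪x, S x⟫ = s x
  have key : ∀ x : H, ⟪x, S x⟫_ℂ = ((s x : ℝ) : ℂ) := by
    intro x
    have h1 : HasSum (fun i => ⟪x, ⟪f i, x⟫_ℂ • C (f i)⟫_ℂ) ⟪x, S x⟫_ℂ :=
      (hS x).mapL (innerSL ℂ x)
    have h2 : HasSum (fun i => ⟪f i, x⟫_ℂ * ⟪x, C (f i)⟫_ℂ) ⟪x, S x⟫_ℂ := by
      simpa [inner_smul_right] using h1
    exact h2.unique (hFrame x).1
  have hbounds : ∀ x : H, A * ‖x‖ ^ 2 ≤ (⟪x, S x⟫_ℂ).re ∧ (⟪x, S x⟫_ℂ).re ≤ B * ‖x‖ ^ 2 := by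
    intro x
    rw [key x]
    exact ⟨by simpa using (hFrame x).2.1, by simpa using (hFrame x).2.2⟩
  have hsa : IsSelfAdjoint S := by
    rw [ContinuousLinearMap.isSelfAdjoint_iff_isSymmetric]
    rw [LinearMap.isSymmetric_iff_inner_map_self_real]
    intro v
    have : ⟪(S : H →ₗ[ℂ] H) v, v⟫_ℂ = (starRingEnd ℂ) ((s v : ℝ) : ℂ) := by
      rw [← inner_conj_symm]
      simp [key v]
    rw [this]
    simp
  refine ⟨hsa, hbounds, ?_⟩
  -- lower bound on ‖S x‖
  have hlow : ∀ x : H, A * ‖x‖ ≤ ‖S x‖ := by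
    intro x
    rcases eq_or_ne x 0 with rfl | hx
    · simp
    have h1 : A * ‖x‖ ^ 2 ≤ ‖x‖ * ‖S x‖ := by
      calc A * ‖x‖ ^ 2 ≤ (⟪x, S x⟫_ℂ).re := (hbounds x).1
        _ ≤ ‖⟪x, S x⟫_ℂ‖ := Complex.re_le_norm _
        _ ≤ ‖x‖ * ‖S x‖ := norm_inner_le_norm _ _
    have hxpos : (0:ℝ) < ‖x‖ := norm_pos_iff.mpr hx
    nlinarith
  have hinj : LinearMap.ker (S : H →ₗ[ℂ] H) = ⊥ := by
    rw [LinearMap.ker_eq_bot']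
    intro x hx
    by_contra hne
    have := hlow x
    rw [show S x = 0 from hx] at this
    simp at this
    have hxpos : (0:ℝ) < ‖x‖ := norm_pos_iff.mpr hne
    nlinarith
  -- range closed
  have hanti : AntilipschitzWith (⟨A, hA.le⟩ : NNReal)⁻¹ S := by
    apply AntilipschitzWith.of_le_mul_dist
    intro x y
    rw [dist_eq_norm, dist_eq_norm, ← map_sub]
    have := hlow (x - y)
    have hApos := hA
    push_cast
    change ‖x - y‖ ≤ A⁻¹ * ‖S (x - y)‖
    rw [le_inv_mul_iff₀ hA]
    simpa using this
  have hclosed : IsClosed (LinearMap.range (S : H →ₗ[ℂ] H) : Set H) := by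
    rw [LinearMap.coe_range]
    exact hanti.isClosed_range S.uniformContinuous
  have hrange : LinearMap.range (S : H →ₗ[ℂ] H) = ⊤ := by
    have hcs : CompleteSpace (LinearMap.range (S : H →ₗ[ℂ] H)) := hclosed.completeSpace_coe
    have horth : (LinearMap.range (S : H →ₗ[ℂ] H))ᗮ = ⊥ := by
      rw [Submodule.eq_bot_iff]
      intro y hy
      have h0' : ⟪S y, y⟫_ℂ = 0 :=
        (Submodule.mem_orthogonal _ y).mp hy (S y) (LinearMap.mem_range_self _ y)
      have h0 : ⟪y, S y⟫_ℂ = 0 := by rw [← inner_conj_symm, h0']; simp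
      by_contra hne
      have := (hbounds y).1
      rw [h0] at this
      simp at this
      have : (0:ℝ) < ‖y‖ := norm_pos_iff.mpr hne
      nlinarith [pow_pos this 2]
    calc LinearMap.range (S : H →ₗ[ℂ] H) = (LinearMap.range (S : H →ₗ[ℂ] H))ᗮᗮ := (Submodule.orthogonal_orthogonal _).symm
      _ = (⊥ : Submodule ℂ H)ᗮ := by rw [horth]
      _ = ⊤ := Submodule.bot_orthogonal_eq_top
  let e := ContinuousLinearEquiv.ofBijective S hinj hrange
  refine ⟨e.symm.toContinuousLinearMap, ?_, ?_, ?_⟩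
  · ext x
    exact ContinuousLinearEquiv.ofBijective_apply_symm_apply S hinj hrange x
  · ext x
    exact ContinuousLinearEquiv.ofBijective_symm_apply_apply S hinj hrange x
  · apply ContinuousLinearMap.opNorm_le_bound _ (by positivity)
    intro y
    have h1 : S (e.symm y) = y := e.apply_symm_apply y
    have h2 : A * ‖e.symm y‖ ≤ ‖y‖ := by
      have h3 := hlow (e.symm y); rwa [h1] at h3
    rw [inv_mul_eq_div, le_div_iff₀ hA]
    simpa [mul_comm] using h2
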